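/- Let d = 2 and suppose H(x1,x2) = Σ_{n≥0} H_{n,n} P_n(x1;𝐫1) P_n(x2;𝐫2) (i.e. H_{n1,n2} = 0 whenever n1 ≠ n2) defines the density dμ•/dμ⊗ of (Y1,Y2) with respect to the product of Meixner laws. Then Y1+Y2 has law μ(𝐫1)∗μ(𝐫2) if and only if Y1 and Y2 are independent (i.e. H_{n,n} = 0 for all n ≥ 1). -/

import Mathlib

open MeasureTheory

/-- A Meixner class of probability laws `μ(𝐫)` on `ℝ`, indexed by the mean–variance
parameter `𝐫`, with orthogonal polynomials `P_n(·;𝐫)`, squared norms `𝔥_n(𝐫)`, and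
generating function `e^{x·u(z)}/M(u(z);𝐫) = Σ_n P_n(x;𝐫) zⁿ/n!`. -/
structure MeixnerFamily where
  μ : ℝ × ℝ → Measure ℝ
  P : ℕ → ℝ → ℝ × ℝ → ℝ
  𝔥 : ℕ → ℝ × ℝ → ℝ
  u : ℝ → ℝ
  M : ℝ → ℝ × ℝ → ℝ
  S : Set ℝ
  prob : ∀ r, IsProbabilityMeasure (μ r)
  S_nhds : S ∈ nhds (0 : ℝ)
  P_meas : ∀ n r, Measurable fun x => P n x r
  P_memL2 : ∀ n r, MemLp (fun x => P n x r) 2 (μ r)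
  P_zero : ∀ x r, P 0 x r = 1
  orth : ∀ r m n, ∫ x, P m x r * P n x r ∂(μ r) = if m = n then 𝔥 n r else 0
  𝔥_pos : ∀ n r, 0 < 𝔥 n r
  M_pos : ∀ r, ∀ z ∈ S, 0 < M (u z) r
  M_eq : ∀ r, ∀ z ∈ S, M (u z) r = ∫ x, Real.exp (u z * x) ∂(μ r)
  gen : ∀ r, ∀ z ∈ S, ∀ x : ℝ,
    HasSum (fun n => P n x r * z ^ n / (n.factorial : ℝ))
      (Real.exp (x * u z) / M (u z) r)
  complete : ∀ r, ∀ g : ℝ → ℝ, Measurable g → MemLp g 2 (μ r) →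
    (∀ n, ∫ x, g x * P n x r ∂(μ r) = 0) → g =ᵐ[μ r] 0

open scoped ENNReal NNReal

lemma coeff_zero_of_hasSum_zero {ε : ℝ} (hε : 0 < ε) {c : ℕ → ℝ}
    (h : ∀ z : ℝ, |z| < ε → HasSum (fun m => c m * z ^ m) 0) : ∀ m, c m = 0 := by
  have hcoeff : ∀ m, (FormalMultilinearSeries.ofScalars ℝ c).coeff m = c m := by
    intro m
    simp [FormalMultilinearSeries.ofScalars, FormalMultilinearSeries.coeff, smul_eq_mul,
      List.prod_ofFn]
  have hfp : HasFPowerSeriesAt (0 : ℝ → ℝ) (FormalMultilinearSeries.ofScalars ℝ c) 0 := by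
    rw [hasFPowerSeriesAt_iff]
    filter_upwards [Metric.ball_mem_nhds (0:ℝ) hε] with z hz
    have hz' : |z| < ε := by simpa [Real.dist_eq] using hz
    have := h z hz'
    simp only [hcoeff, smul_eq_mul, Pi.zero_apply]
    convert this using 1
    · rfl
    · funext m; ring
  have hp0 := hfp.eq_zero
  intro m
  have h2 := hcoeff m
  rw [hp0] at h2
  simpa [FormalMultilinearSeries.coeff] using h2.symm

/-- Corollary 1: for a diagonal expansion `H(x1,x2) = Σ_n H_{n,n} P_n(x1;𝐫1)P_n(x2;𝐫2)`,
the sum `Y1+Y2` has law `μ(𝐫1)∗μ(𝐫2)` iff `Y1` and `Y2` are independent,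
i.e. `H_{n,n} = 0` for all `n ≥ 1`. -/
theorem meixner_diagonal_expansion_sum_iff_indep
    (MF : MeixnerFamily) (r1 r2 : ℝ × ℝ)
    (H : ℝ × ℝ → ℝ) (hHmeas : Measurable H) (hHnn : ∀ p, 0 ≤ H p)
    (hHL2 : MemLp H 2 ((MF.μ r1).prod (MF.μ r2)))
    (Hc : ℕ → ℝ)
    (hcoef : ∀ n1 n2 : ℕ,
      ∫ p, H p * MF.P n1 p.1 r1 * MF.P n2 p.2 r2 ∂((MF.μ r1).prod (MF.μ r2))
        = if n1 = n2 then Hc n1 * (MF.𝔥 n1 r1 * MF.𝔥 n2 r2) else 0)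
    (hone : Hc 0 = 1) :
    (Measure.map (fun p : ℝ × ℝ => p.1 + p.2)
        (((MF.μ r1).prod (MF.μ r2)).withDensity fun p => ENNReal.ofReal (H p))
      = Measure.map (fun p : ℝ × ℝ => p.1 + p.2) ((MF.μ r1).prod (MF.μ r2)))
    ↔ (∀ n : ℕ, 1 ≤ n → Hc n = 0) := by
  haveI h1 : IsProbabilityMeasure (MF.μ r1) := MF.prob r1
  haveI h2 : IsProbabilityMeasure (MF.μ r2) := MF.prob r2
  -- basic facts
  have h𝔥0 : ∀ r, MF.𝔥 0 r = 1 := by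
    intro r
    haveI := MF.prob r
    have h := (MF.orth r 0 0).symm
    simpa [MF.P_zero] using h
  have hPint : ∀ (r : ℝ × ℝ) (i : ℕ), ∫ x, MF.P i x r ∂(MF.μ r) = if i = 0 then 1 else 0 := by
    intro r i
    have h := MF.orth r i 0
    simp only [MF.P_zero, mul_one] at h
    rw [h, h𝔥0 r]
  have hPsq : ∀ (r : ℝ × ℝ) (i : ℕ), Integrable (fun x => MF.P i x r ^ 2) (MF.μ r) :=
    fun r i => (MF.P_memL2 i r).integrable_sq
  have hPPmem : ∀ i j, MemLp (fun p : ℝ × ℝ => MF.P i p.1 r1 * MF.P j p.2 r2) 2 ((MF.μ r1).prod (MF.μ r2)) := by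
    intro i j
    have hm : AEStronglyMeasurable (fun p : ℝ × ℝ => MF.P i p.1 r1 * MF.P j p.2 r2) ((MF.μ r1).prod (MF.μ r2)) :=
      (((MF.P_meas i r1).comp measurable_fst).mul
        ((MF.P_meas j r2).comp measurable_snd)).aestronglyMeasurable
    rw [memLp_two_iff_integrable_sq hm]
    have h := Integrable.mul_prod (hPsq r1 i) (hPsq r2 j)
    simpa [mul_pow] using h
  have hHPPint : ∀ i j,
      Integrable (fun p => H p * (MF.P i p.1 r1 * MF.P j p.2 r2)) ((MF.μ r1).prod (MF.μ r2)) := by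
    intro i j
    have harith : (1 : ℝ≥0∞) / 1 = 1 / 2 + 1 / 2 := by
      rw [ENNReal.div_add_div_same, div_one]
      rw [show (1:ℝ≥0∞) + 1 = 2 from one_add_one_eq_two, ENNReal.div_self] <;> norm_num
    have h := MemLp.smul (r := 1) (hPPmem i j) hHL2
    have h2 := memLp_one_iff_integrable.mp h
    exact h2
  have hPPint : ∀ i j, Integrable (fun p : ℝ × ℝ => MF.P i p.1 r1 * MF.P j p.2 r2) ((MF.μ r1).prod (MF.μ r2)) :=
    fun i j => (hPPmem i j).integrable one_le_two
  have hPPval : ∀ i j, ∫ p, MF.P i p.1 r1 * MF.P j p.2 r2 ∂((MF.μ r1).prod (MF.μ r2))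
      = (if i = 0 then (1:ℝ) else 0) * (if j = 0 then (1:ℝ) else 0) := by
    intro i j
    have hip := integral_prod_mul (μ := MF.μ r1) (ν := MF.μ r2)
      (fun x => MF.P i x r1) (fun y => MF.P j y r2)
    rw [hip, hPint, hPint]
  have hHval : ∀ i j, ∫ p, H p * (MF.P i p.1 r1 * MF.P j p.2 r2) ∂((MF.μ r1).prod (MF.μ r2))
      = if i = j then Hc i * (MF.𝔥 i r1 * MF.𝔥 j r2) else 0 := by
    intro i j
    rw [← hcoef i j]
    congr 1; funext p; ring
  constructor
  · -- forward direction
    intro hmap n hn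
    obtain ⟨ε, hε, hball⟩ := Metric.mem_nhds_iff.mp MF.S_nhds
    have hS : ∀ z : ℝ, |z| < ε → z ∈ MF.S := by
      intro z hz
      exact hball (by simpa [Metric.mem_ball, Real.dist_eq] using hz)
    set a : ℝ → ℝ → ℕ → ℝ := fun x1 x2 m => ∑ kl ∈ Finset.HasAntidiagonal.antidiagonal m,
      (MF.P kl.1 x1 r1 / kl.1.factorial) * (MF.P kl.2 x2 r2 / kl.2.factorial) with ha
    have hsum : ∀ x1 x2 z : ℝ, |z| < ε →
        HasSum (fun m => a x1 x2 m * z ^ m)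
          (Real.exp ((x1 + x2) * MF.u z) / (MF.M (MF.u z) r1 * MF.M (MF.u z) r2)) := by
      intro x1 x2 z hz
      have hzS := hS z hz
      have hg1 := MF.gen r1 z hzS x1
      have hg2 := MF.gen r2 z hzS x2
      have s1 : Summable fun m => ‖MF.P m x1 r1 * z ^ m / (m.factorial : ℝ)‖ := by
        simpa only [Real.norm_eq_abs] using hg1.summable.abs
      have s2 : Summable fun m => ‖MF.P m x2 r2 * z ^ m / (m.factorial : ℝ)‖ := by
        simpa only [Real.norm_eq_abs] using hg2.summable.abs
      have hts := tsum_mul_tsum_eq_tsum_sum_antidiagonal_of_summable_norm s1 s2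
      have hsummable := (summable_norm_sum_mul_antidiagonal_of_summable_norm s1 s2).of_norm
      rw [hg1.tsum_eq, hg2.tsum_eq] at hts
      have hhs : HasSum (fun m => ∑ kl ∈ Finset.HasAntidiagonal.antidiagonal m,
          (MF.P kl.1 x1 r1 * z ^ kl.1 / (kl.1.factorial : ℝ)) *
            (MF.P kl.2 x2 r2 * z ^ kl.2 / (kl.2.factorial : ℝ)))
          (Real.exp (x1 * MF.u z) / MF.M (MF.u z) r1 *
            (Real.exp (x2 * MF.u z) / MF.M (MF.u z) r2)) := by
        rw [hsummable.hasSum_iff]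
        exact hts.symm
      have heq : (fun m => ∑ kl ∈ Finset.HasAntidiagonal.antidiagonal m,
          (MF.P kl.1 x1 r1 * z ^ kl.1 / (kl.1.factorial : ℝ)) *
            (MF.P kl.2 x2 r2 * z ^ kl.2 / (kl.2.factorial : ℝ)))
          = fun m => a x1 x2 m * z ^ m := by
        funext m
        rw [ha]
        simp only
        rw [Finset.sum_mul]
        refine Finset.sum_congr rfl fun kl hkl => ?_
        have hm := Finset.HasAntidiagonal.mem_antidiagonal.mp hkl
        rw [← hm, pow_add]
        ring
      rw [heq] at hhs
      convert hhs using 1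
      rw [add_mul, Real.exp_add, div_mul_div_comm]
    have key : ∀ x1 x2 : ℝ, ∀ m, a x1 x2 m = a (x1 + x2) 0 m := by
      intro x1 x2 m
      have h0 : ∀ z : ℝ, |z| < ε →
          HasSum (fun m => (a x1 x2 m - a (x1 + x2) 0 m) * z ^ m) 0 := by
        intro z hz
        have hA := hsum x1 x2 z hz
        have hB := hsum (x1 + x2) 0 z hz
        rw [add_zero] at hB
        simpa [sub_mul] using hA.sub hB
      have := coeff_zero_of_hasSum_zero hε h0 m
      linarith
    set φ : ℝ → ℝ := fun s => a s 0 (2 * n) with hφdef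
    have hφmeas : Measurable φ := by
      apply Finset.measurable_sum
      intro kl _
      exact ((MF.P_meas kl.1 r1).div_const _).mul_const _
    have hsummeas : Measurable (fun p : ℝ × ℝ => p.1 + p.2) :=
      measurable_fst.add measurable_snd
    have hint1 : ∫ p, φ (p.1 + p.2)
          ∂(((MF.μ r1).prod (MF.μ r2)).withDensity fun p => ENNReal.ofReal (H p))
        = ∫ p, φ (p.1 + p.2) ∂((MF.μ r1).prod (MF.μ r2)) := by
      have e1 : ∫ s, φ s ∂(Measure.map (fun p : ℝ × ℝ => p.1 + p.2)
            (((MF.μ r1).prod (MF.μ r2)).withDensity fun p => ENNReal.ofReal (H p)))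
          = ∫ s, φ s ∂(Measure.map (fun p : ℝ × ℝ => p.1 + p.2) ((MF.μ r1).prod (MF.μ r2))) := by rw [hmap]
      rwa [integral_map hsummeas.aemeasurable hφmeas.aestronglyMeasurable,
        integral_map hsummeas.aemeasurable hφmeas.aestronglyMeasurable] at e1
    have hwd : ∫ p, φ (p.1 + p.2) ∂(((MF.μ r1).prod (MF.μ r2)).withDensity fun p => ENNReal.ofReal (H p))
        = ∫ p, H p * φ (p.1 + p.2) ∂((MF.μ r1).prod (MF.μ r2)) := by
      have hHnnmeas : Measurable fun p : ℝ × ℝ => (H p).toNNReal := hHmeas.real_toNNReal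
      have h := integral_withDensity_eq_integral_smul (μ := (MF.μ r1).prod (MF.μ r2))
        hHnnmeas (fun p : ℝ × ℝ => φ (p.1 + p.2))
      have hcast : (fun p : ℝ × ℝ => ENNReal.ofReal (H p))
          = fun p : ℝ × ℝ => ((H p).toNNReal : ℝ≥0∞) := rfl
      rw [hcast]
      rw [h]
      congr 1
      funext p
      rw [NNReal.smul_def, smul_eq_mul, Real.coe_toNNReal _ (hHnn p)]
    have hφsum : ∀ p : ℝ × ℝ, φ (p.1 + p.2) = a p.1 p.2 (2 * n) :=
      fun p => (key p.1 p.2 (2 * n)).symm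
    have hL : ∫ p, H p * φ (p.1 + p.2) ∂((MF.μ r1).prod (MF.μ r2))
        = Hc n * (MF.𝔥 n r1 * MF.𝔥 n r2) / ((n.factorial : ℝ) * n.factorial) := by
      have hrw : (fun p : ℝ × ℝ => H p * φ (p.1 + p.2))
          = fun p => ∑ kl ∈ Finset.HasAntidiagonal.antidiagonal (2 * n),
            (H p * (MF.P kl.1 p.1 r1 * MF.P kl.2 p.2 r2)) /
              ((kl.1.factorial : ℝ) * kl.2.factorial) := by
        funext p
        rw [hφsum p, ha]
        simp only
        rw [Finset.mul_sum]
        refine Finset.sum_congr rfl fun kl _ => ?_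
        ring
      rw [hrw, integral_finset_sum]
      · have : ∀ kl ∈ Finset.HasAntidiagonal.antidiagonal (2 * n),
            ∫ p, (H p * (MF.P kl.1 p.1 r1 * MF.P kl.2 p.2 r2)) /
              ((kl.1.factorial : ℝ) * kl.2.factorial) ∂((MF.μ r1).prod (MF.μ r2))
            = (if kl.1 = kl.2 then Hc kl.1 * (MF.𝔥 kl.1 r1 * MF.𝔥 kl.2 r2) else 0) /
              ((kl.1.factorial : ℝ) * kl.2.factorial) := by
          intro kl _
          rw [integral_div, hHval]
        rw [Finset.sum_congr rfl this]
        rw [Finset.sum_eq_single (n, n)]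
        · simp
        · intro kl hkl hne
          have hm := Finset.HasAntidiagonal.mem_antidiagonal.mp hkl
          have hneq : kl.1 ≠ kl.2 := by
            intro hEq
            apply hne
            have h1 : kl.1 = n := by omega
            have h2 : kl.2 = n := by omega
            exact Prod.ext h1 h2
          rw [if_neg hneq, zero_div]
        · intro hnot
          exact absurd (Finset.HasAntidiagonal.mem_antidiagonal.mpr (by omega)) hnot
      · intro kl _
        exact (hHPPint kl.1 kl.2).div_const _
    have hR : ∫ p, φ (p.1 + p.2) ∂((MF.μ r1).prod (MF.μ r2)) = 0 := by
      have hrw : (fun p : ℝ × ℝ => φ (p.1 + p.2))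
          = fun p => ∑ kl ∈ Finset.HasAntidiagonal.antidiagonal (2 * n),
            (MF.P kl.1 p.1 r1 * MF.P kl.2 p.2 r2) /
              ((kl.1.factorial : ℝ) * kl.2.factorial) := by
        funext p
        rw [hφsum p, ha]
        simp only
        refine Finset.sum_congr rfl fun kl _ => ?_
        ring
      rw [hrw, integral_finset_sum]
      · refine Finset.sum_eq_zero fun kl hkl => ?_
        have hm := Finset.HasAntidiagonal.mem_antidiagonal.mp hkl
        rw [integral_div, hPPval]
        rcases Nat.eq_zero_or_pos kl.1 with hk1 | hk1
        · have : kl.2 ≠ 0 := by omega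
          rw [if_neg this, mul_zero, zero_div]
        · rw [if_neg (by omega), zero_mul, zero_div]
      · intro kl _
        exact (hPPint kl.1 kl.2).div_const _
    have hfinal : Hc n * (MF.𝔥 n r1 * MF.𝔥 n r2) / ((n.factorial : ℝ) * n.factorial) = 0 := by
      rw [← hL, ← hwd, hint1, hR]
    have hden : ((n.factorial : ℝ) * n.factorial) ≠ 0 := by positivity
    have hnum : Hc n * (MF.𝔥 n r1 * MF.𝔥 n r2) = 0 := by
      field_simp at hfinal
      rw [mul_zero, mul_assoc] at hfinal
      exact hfinal
    have hpos : 0 < MF.𝔥 n r1 * MF.𝔥 n r2 := mul_pos (MF.𝔥_pos n r1) (MF.𝔥_pos n r2)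
    rcases mul_eq_zero.mp hnum with h | h
    · exact h
    · exact absurd h hpos.ne'
  · -- reverse direction
    intro h0
    set G : ℝ × ℝ → ℝ := fun p => H p - 1 with hGdef
    have hGmeas : Measurable G := hHmeas.sub measurable_const
    have hGmem : MemLp G 2 ((MF.μ r1).prod (MF.μ r2)) := hHL2.sub (memLp_const 1)
    have hGPP : ∀ i j, ∫ p, G p * (MF.P i p.1 r1 * MF.P j p.2 r2) ∂((MF.μ r1).prod (MF.μ r2)) = 0 := by
      intro i j
      have hrw : (fun p => G p * (MF.P i p.1 r1 * MF.P j p.2 r2))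
          = fun p => H p * (MF.P i p.1 r1 * MF.P j p.2 r2)
            - MF.P i p.1 r1 * MF.P j p.2 r2 := by
        funext p
        rw [hGdef]
        ring
      rw [hrw, integral_sub (hHPPint i j) (hPPint i j), hHval, hPPval]
      rcases eq_or_ne i j with rfl | hne
      · rcases Nat.eq_zero_or_pos i with rfl | hpos
        · simp [hone, h𝔥0]
        · rw [h0 i hpos, if_pos rfl, if_neg (by omega)]
          simp
      · rw [if_neg hne]
        rcases Nat.eq_zero_or_pos i with rfl | hpos
        · rw [if_neg (Ne.symm hne)]
          simp
        · rw [if_neg (by omega)]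
          simp
    -- stage 1 : L² bound for the partial pairing
    have hsec2 : ∀ j : ℕ, MemLp (fun x => ∫ y, G (x, y) * MF.P j y r2 ∂(MF.μ r2)) 2 (MF.μ r1) := by
      intro j
      have hfm : Measurable (fun p : ℝ × ℝ => G p * MF.P j p.2 r2) :=
        hGmeas.mul ((MF.P_meas j r2).comp measurable_snd)
      have hmeas : StronglyMeasurable (fun x => ∫ y, G (x, y) * MF.P j y r2 ∂(MF.μ r2)) :=
        hfm.stronglyMeasurable.integral_prod_right'
      refine ⟨hmeas.aestronglyMeasurable, ?_⟩
      rw [eLpNorm_eq_lintegral_rpow_enorm_toReal two_ne_zero ENNReal.ofNat_ne_top]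
      refine ENNReal.rpow_lt_top_of_nonneg (by positivity) ?_
      have htR : (2 : ℝ≥0∞).toReal = (2 : ℝ) := by norm_num
      rw [htR]
      refine ne_of_lt ?_
      set B := ∫⁻ y, (‖MF.P j y r2‖₊ : ℝ≥0∞) ^ (2:ℝ) ∂(MF.μ r2) with hB
      have hBlt : B < ⊤ := by
        have := lintegral_rpow_enorm_lt_top_of_eLpNorm_lt_top two_ne_zero ENNReal.ofNat_ne_top
          (MF.P_memL2 j r2).2
        rwa [htR] at this
      have hG2 : ∫⁻ p, (‖G p‖₊ : ℝ≥0∞) ^ (2:ℝ) ∂((MF.μ r1).prod (MF.μ r2)) < ⊤ := by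
        have := lintegral_rpow_enorm_lt_top_of_eLpNorm_lt_top two_ne_zero ENNReal.ofNat_ne_top
          hGmem.2
        rwa [htR] at this
      have hconj : Real.HolderConjugate 2 2 := Real.HolderConjugate.two_two
      have hpt : ∀ x, (‖∫ y, G (x, y) * MF.P j y r2 ∂(MF.μ r2)‖₊ : ℝ≥0∞) ^ (2:ℝ)
          ≤ (∫⁻ y, (‖G (x, y)‖₊ : ℝ≥0∞) ^ (2:ℝ) ∂(MF.μ r2)) * B := by
        intro x
        have hn1 : (‖∫ y, G (x, y) * MF.P j y r2 ∂(MF.μ r2)‖₊ : ℝ≥0∞)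
            ≤ ∫⁻ y, ‖G (x, y) * MF.P j y r2‖₊ ∂(MF.μ r2) :=
          enorm_integral_le_lintegral_enorm _
        have hn2 : ∫⁻ y, (‖G (x, y) * MF.P j y r2‖₊ : ℝ≥0∞) ∂(MF.μ r2)
            ≤ (∫⁻ y, (‖G (x, y)‖₊ : ℝ≥0∞) ^ (2:ℝ) ∂(MF.μ r2)) ^ (1/2 : ℝ) * B ^ (1/2 : ℝ) := by
          have hH1 : ∫⁻ y, (‖G (x, y) * MF.P j y r2‖₊ : ℝ≥0∞) ∂(MF.μ r2)
              = ∫⁻ y, (‖G (x, y)‖₊ : ℝ≥0∞) * (‖MF.P j y r2‖₊ : ℝ≥0∞) ∂(MF.μ r2) := by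
            apply lintegral_congr
            intro y
            rw [nnnorm_mul, ENNReal.coe_mul]
          rw [hH1, hB]
          exact ENNReal.lintegral_mul_le_Lp_mul_Lq (MF.μ r2) hconj
            ((hGmeas.comp measurable_prodMk_left).nnnorm.coe_nnreal_ennreal.aemeasurable)
            ((MF.P_meas j r2).nnnorm.coe_nnreal_ennreal.aemeasurable)
        calc (‖∫ y, G (x, y) * MF.P j y r2 ∂(MF.μ r2)‖₊ : ℝ≥0∞) ^ (2:ℝ)
            ≤ ((∫⁻ y, (‖G (x, y)‖₊ : ℝ≥0∞) ^ (2:ℝ) ∂(MF.μ r2)) ^ (1/2 : ℝ) * B ^ (1/2 : ℝ)) ^ (2:ℝ) :=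
              ENNReal.rpow_le_rpow (hn1.trans hn2) (by norm_num)
          _ = (∫⁻ y, (‖G (x, y)‖₊ : ℝ≥0∞) ^ (2:ℝ) ∂(MF.μ r2)) * B := by
              rw [ENNReal.mul_rpow_of_nonneg _ _ (by norm_num), ← ENNReal.rpow_mul,
                ← ENNReal.rpow_mul]
              norm_num
      have hGsqmeas : Measurable fun p : ℝ × ℝ => (‖G p‖₊ : ℝ≥0∞) ^ (2:ℝ) :=
        hGmeas.nnnorm.coe_nnreal_ennreal.pow_const _
      calc ∫⁻ x, (‖∫ y, G (x, y) * MF.P j y r2 ∂(MF.μ r2)‖₊ : ℝ≥0∞) ^ (2:ℝ) ∂(MF.μ r1)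
          ≤ ∫⁻ x, (∫⁻ y, (‖G (x, y)‖₊ : ℝ≥0∞) ^ (2:ℝ) ∂(MF.μ r2)) * B ∂(MF.μ r1) := lintegral_mono hpt
        _ = (∫⁻ x, ∫⁻ y, (‖G (x, y)‖₊ : ℝ≥0∞) ^ (2:ℝ) ∂(MF.μ r2) ∂(MF.μ r1)) * B := by
            rw [lintegral_mul_const]
            exact hGsqmeas.lintegral_prod_right'
        _ = (∫⁻ p, (‖G p‖₊ : ℝ≥0∞) ^ (2:ℝ) ∂((MF.μ r1).prod (MF.μ r2))) * B := by
            rw [lintegral_prod _ hGsqmeas.aemeasurable]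
        _ < ⊤ := ENNReal.mul_lt_top hG2 hBlt
    have hk0 : ∀ j : ℕ, (fun x => ∫ y, G (x, y) * MF.P j y r2 ∂(MF.μ r2)) =ᵐ[MF.μ r1] 0 := by
      intro j
      have hfm : Measurable (fun p : ℝ × ℝ => G p * MF.P j p.2 r2) :=
        hGmeas.mul ((MF.P_meas j r2).comp measurable_snd)
      apply MF.complete r1 _ hfm.stronglyMeasurable.integral_prod_right'.measurable (hsec2 j)
      intro i
      have hint : Integrable (fun p : ℝ × ℝ => G p * (MF.P i p.1 r1 * MF.P j p.2 r2)) ((MF.μ r1).prod (MF.μ r2)) := by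
        have hrw : (fun p : ℝ × ℝ => G p * (MF.P i p.1 r1 * MF.P j p.2 r2))
            = fun p => H p * (MF.P i p.1 r1 * MF.P j p.2 r2)
              - MF.P i p.1 r1 * MF.P j p.2 r2 := by
          funext p
          rw [hGdef]
          ring
        rw [hrw]
        exact (hHPPint i j).sub (hPPint i j)
      have hstep : ∀ x : ℝ, (∫ y, G (x, y) * MF.P j y r2 ∂(MF.μ r2)) * MF.P i x r1
          = ∫ y, G (x, y) * (MF.P i x r1 * MF.P j y r2) ∂(MF.μ r2) := by
        intro x
        rw [← integral_mul_const]
        congr 1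
        funext y
        ring
      calc ∫ x, (∫ y, G (x, y) * MF.P j y r2 ∂(MF.μ r2)) * MF.P i x r1 ∂(MF.μ r1)
          = ∫ x, ∫ y, G (x, y) * (MF.P i x r1 * MF.P j y r2) ∂(MF.μ r2) ∂(MF.μ r1) := by
            simp_rw [hstep]
        _ = ∫ p, G p * (MF.P i p.1 r1 * MF.P j p.2 r2) ∂((MF.μ r1).prod (MF.μ r2)) := (integral_prod _ hint).symm
        _ = 0 := hGPP i j
    have hsecL2 : ∀ᵐ x ∂(MF.μ r1), MemLp (fun y => G (x, y)) 2 (MF.μ r2) := by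
      have hGsq : Integrable (fun p => G p ^ 2) ((MF.μ r1).prod (MF.μ r2)) := hGmem.integrable_sq
      filter_upwards [hGsq.prod_right_ae] with x hx
      exact (memLp_two_iff_integrable_sq
        ((hGmeas.comp measurable_prodMk_left).aestronglyMeasurable)).mpr hx
    have hfinalae : ∀ᵐ x ∂(MF.μ r1), (fun y => G (x, y)) =ᵐ[MF.μ r2] 0 := by
      filter_upwards [ae_all_iff.mpr hk0, hsecL2] with x hx1 hx2
      exact MF.complete r2 _ (hGmeas.comp measurable_prodMk_left) hx2 (fun j => hx1 j)
    have hset : MeasurableSet {p : ℝ × ℝ | G p = 0} := hGmeas (measurableSet_singleton 0)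
    have hGzero : ∀ᵐ p ∂((MF.μ r1).prod (MF.μ r2)), G p = 0 := by
      rw [Measure.ae_prod_iff_ae_ae hset]
      exact hfinalae
    have hH1 : (fun p : ℝ × ℝ => ENNReal.ofReal (H p)) =ᵐ[(MF.μ r1).prod (MF.μ r2)] 1 := by
      filter_upwards [hGzero] with p hp
      have : H p = 1 := by
        rw [hGdef] at hp
        simp only at hp
        linarith
      simp [this]
    rw [withDensity_congr_ae hH1, withDensity_one]
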